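/- Let n ≥ 2 and let f be a positive function on ℝⁿ \ {0}, homogeneous of degree 1. Suppose there exist a non-negative polynomial D on ℝⁿ that is not a square of a polynomial, and for every large odd integer m, polynomials P_m and S_m with f(x)^m = P_m(x) + S_m(x)√(D(x)) for all x ≠ 0. Then f itself lies in the field F(√D), i.e., f = P + S√D on ℝⁿ \ {0} for some rational functions P and S on ℝⁿ. -/

import Mathlib

open MvPolynomial
private def pkAux {R : Type*} [CommRing R] (D A B : R) : ℕ → R × R
  | 0 => (1, 0)
  | j+1 => ((pkAux D A B j).1 * A + D * B * (pkAux D A B j).2,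
            (pkAux D A B j).2 * A + B * (pkAux D A B j).1)

private lemma pkAux_eval {n : ℕ} (D A B : MvPolynomial (Fin n) ℝ) (x : Fin n → ℝ)
    (hD : 0 ≤ eval x D) (j : ℕ) :
    eval x (pkAux D A B j).1 + eval x (pkAux D A B j).2 * Real.sqrt (eval x D)
      = (eval x A + eval x B * Real.sqrt (eval x D)) ^ j := by
  induction j with
  | zero => simp [pkAux]
  | succ j ih =>
    have hs : Real.sqrt (eval x D) * Real.sqrt (eval x D) = eval x D :=
      Real.mul_self_sqrt hD
    simp only [pkAux, map_mul, map_add, pow_succ]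
    rw [← ih]
    linear_combination (-(eval x B) * eval x (pkAux D A B j).2) * hs

private lemma square_of_ratio {n : ℕ} (D P S : MvPolynomial (Fin n) ℝ)
    (hS : S ≠ 0) (h : P ^ 2 = S ^ 2 * D) : ∃ s, D = s ^ 2 := by
  let K := FractionRing (MvPolynomial (Fin n) ℝ)
  let φ : MvPolynomial (Fin n) ℝ →+* K := algebraMap _ K
  have hinj : Function.Injective φ := IsFractionRing.injective _ K
  have hφS : φ S ≠ 0 := fun h0 => hS (hinj (by simpa using h0))
  set t : K := φ P / φ S with ht
  have ht2 : t ^ 2 = φ D := by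
    rw [ht, div_pow, div_eq_iff (pow_ne_zero _ hφS), ← map_pow, ← map_pow, ← map_mul, h,
      mul_comm]
  have hint : IsIntegral (MvPolynomial (Fin n) ℝ) t := by
    refine ⟨Polynomial.X ^ 2 - Polynomial.C D, Polynomial.monic_X_pow_sub_C D (by norm_num), ?_⟩
    simp only [Polynomial.eval₂_sub, Polynomial.eval₂_pow, Polynomial.eval₂_X,
      Polynomial.eval₂_C, ht2]
    exact sub_self _
  obtain ⟨s, hs⟩ := IsIntegrallyClosed.isIntegral_iff.mp hint
  refine ⟨s, hinj ?_⟩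
  rw [map_pow]
  show φ D = (algebraMap _ K s) ^ 2
  rw [hs, ht2]

/-- Let `f` be a positive function on `ℝⁿ \ {0}` (`n ≥ 2`), homogeneous of degree 1, and
`D` a non-negative polynomial which is not a square of a polynomial. If for every large odd
`m` there are polynomials `P_m`, `S_m` with `f^m = P_m + S_m √D` away from the origin, then
`f` itself lies in `F(√D)`: there are rational functions (written here with a common
denominator `r`) such that `f = p/r + (q/r) √D` on `ℝⁿ \ {0}` wherever `r` does not
vanish. -/
theorem positive_homogeneous_lies_in_quadratic_extension (n : ℕ) (hn : 2 ≤ n)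
    (f : (Fin n → ℝ) → ℝ)
    (hpos : ∀ x : Fin n → ℝ, x ≠ 0 → 0 < f x)
    (hhom : ∀ a : ℝ, 0 < a → ∀ x : Fin n → ℝ, x ≠ 0 → f (a • x) = a * f x)
    (D : MvPolynomial (Fin n) ℝ)
    (hD0 : ∀ x : Fin n → ℝ, 0 ≤ eval x D)
    (hDsq : ¬ ∃ s : MvPolynomial (Fin n) ℝ, D = s ^ 2)
    (hM : ∃ M : ℕ, ∀ m : ℕ, M ≤ m → Odd m →
      ∃ P S : MvPolynomial (Fin n) ℝ,
        ∀ x : Fin n → ℝ, x ≠ 0 →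
          f x ^ m = eval x P + eval x S * Real.sqrt (eval x D)) :
    ∃ p q r : MvPolynomial (Fin n) ℝ, r ≠ 0 ∧
      ∀ x : Fin n → ℝ, x ≠ 0 → eval x r ≠ 0 →
        f x = eval x p / eval x r + (eval x q / eval x r) * Real.sqrt (eval x D) := by
  obtain ⟨M, hMall⟩ := hM
  obtain ⟨P, S, hPS⟩ := hMall (2 * M + 1) (by omega) ⟨M, by ring⟩
  obtain ⟨P', S', hPS'⟩ := hMall (2 * M + 3) (by omega) ⟨M + 1, by ring⟩
  set E : MvPolynomial (Fin n) ℝ := P ^ 2 - S ^ 2 * D with hEdef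
  set A : MvPolynomial (Fin n) ℝ := P' * P - S' * S * D with hAdef
  set B : MvPolynomial (Fin n) ℝ := S' * P - P' * S with hBdef
  set Ak : MvPolynomial (Fin n) ℝ := (pkAux D A B (M + 1)).1 with hAkdef
  set Bk : MvPolynomial (Fin n) ℝ := (pkAux D A B (M + 1)).2 with hBkdef
  -- the point (1,1,...,1) is nonzero
  have hx1 : (fun _ => (1:ℝ) : Fin n → ℝ) ≠ 0 := by
    intro h0
    have := congrFun h0 ⟨0, by omega⟩
    norm_num at this
  -- E ≠ 0
  have hE : E ≠ 0 := by
    by_cases hS : S = 0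
    · have hP : P ≠ 0 := by
        intro hP0
        have h1 := hPS (fun _ => 1) hx1
        rw [hP0, hS] at h1
        simp at h1
        exact absurd h1 (ne_of_gt (hpos _ hx1))
      simpa [hEdef, hS] using pow_ne_zero 2 hP
    · intro hE0
      rw [hEdef] at hE0
      exact hDsq (square_of_ratio D P S hS (sub_eq_zero.mp hE0))
  refine ⟨Ak * P - Bk * S * D, Bk * P - Ak * S, E ^ (M + 2), pow_ne_zero _ hE, ?_⟩
  intro x hx hr
  set s : ℝ := Real.sqrt (eval x D) with hs_def
  have hs : s * s = eval x D := Real.mul_self_sqrt (hD0 x)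
  have h1 : f x ^ (2 * M + 1) = eval x P + eval x S * s := hPS x hx
  have h2 : f x ^ (2 * M + 3) = eval x P' + eval x S' * s := hPS' x hx
  have h2' : f x ^ 2 * (eval x P + eval x S * s) = eval x P' + eval x S' * s := by
    rw [← h1, ← h2]; ring
  have hEe : f x ^ 2 * eval x E = eval x A + eval x B * s := by
    simp only [hEdef, hAdef, hBdef, map_sub, map_mul, map_pow]
    linear_combination (f x ^ 2 * eval x S ^ 2 - eval x S' * eval x S) * hs +
      (eval x P - eval x S * s) * h2'
  have h3 : f x ^ (2 * M + 2) * eval x E ^ (M + 1) = eval x Ak + eval x Bk * s := by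
    rw [hAkdef, hBkdef, pkAux_eval D A B x (hD0 x), ← hEe, mul_pow, ← pow_mul]
    ring_nf
  have h4 : f x * (eval x P + eval x S * s) * eval x E ^ (M + 1)
      = eval x Ak + eval x Bk * s := by
    rw [← h1, ← h3]; ring
  have hEev : eval x E = eval x P ^ 2 - eval x S ^ 2 * eval x D := by
    simp [hEdef]
  have h5 : f x * eval x E ^ (M + 2) = eval x (Ak * P - Bk * S * D) +
      eval x (Bk * P - Ak * S) * s := by
    simp only [map_sub, map_mul]
    linear_combination (f x * eval x S ^ 2 * eval x E ^ (M+1) - eval x Bk * eval x S) * hs +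
      (eval x P - eval x S * s) * h4 + (f x * eval x E * eval x E ^ M) * hEev
  rw [map_pow] at hr ⊢
  simp only [map_sub, map_mul] at h5 ⊢
  field_simp
  linear_combination h5
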